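/- The localized empirical discrepancy is bounded: disc_{H_ε^K}(Q̂K, P̂) = max_{h,h' ∈ H_ε^K} |L_Q̂K(h,h') − L_P̂(h,h')| ≤ (2kμ/n)·Σ_{x ∈ 𝒰} d(x, ℒK) + 2ε, where d(x, ℒK) = min_{x' ∈ ℒK} d(x, x'). -/

import Mathlib

/-- The localized empirical discrepancy (its attained maximum `D`) is bounded by
`(2kμ/n) Σ_{x ∈ 𝒰} d(x, ℒK) + 2ε`. -/
theorem stmt3 {X : Type*} [MetricSpace X] (k μ ε : ℝ) (L : ℝ → ℝ → ℝ)
    (hLnonneg : ∀ y y', 0 ≤ L y y')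
    (hLsymm : ∀ y y', L y y' = L y' y)
    (hLtri : ∀ a b c, L a c ≤ L a b + L b c)
    (hLlip : ∀ y y', L y y' ≤ μ * |y - y'|)
    (hLrefl : ∀ y, L y y = 0)
    (H : Set (X → ℝ))
    (hHlip : ∀ h ∈ H, ∀ a b, |h a - h b| ≤ k * dist a b)
    (f : X → ℝ) (hf : f ∈ H)
    (LK : Finset X) (hLK : LK.Nonempty) (U : Finset X)
    (Hloc : Set (X → ℝ))
    (hHloc : Hloc = {h | h ∈ H ∧ ∀ x ∈ LK, L (h x) (f x) < ε})
    (D : ℝ)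
    (hattain : ∃ h ∈ Hloc, ∃ h' ∈ Hloc,
      D = |(∑ x ∈ LK, L (h x) (h' x)) / LK.card - (∑ x ∈ U, L (h x) (h' x)) / U.card|)
    (hub : ∀ h ∈ Hloc, ∀ h' ∈ Hloc,
      |(∑ x ∈ LK, L (h x) (h' x)) / LK.card - (∑ x ∈ U, L (h x) (h' x)) / U.card| ≤ D) :
    D ≤ (2 * k * μ / U.card) * ∑ x ∈ U, LK.inf' hLK (fun x' => dist x x') + 2 * ε := by
  obtain ⟨h, hh, h', hh', hD⟩ := hattain
  rw [hHloc] at hh hh'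
  obtain ⟨hhH, hhε⟩ := hh
  obtain ⟨hh'H, hh'ε⟩ := hh'
  -- μ ≥ 0
  have hμ : 0 ≤ μ := by
    have h1 := hLnonneg 0 1
    have h2 := hLlip 0 1
    have : |(0:ℝ) - 1| = 1 := by norm_num
    rw [this] at h2; linarith
  -- ε ≥ 0
  have hε : 0 ≤ ε := by
    obtain ⟨x0, hx0⟩ := hLK
    have := hLnonneg (h x0) (f x0)
    have := hhε x0 hx0
    linarith
  set S := ∑ x ∈ U, LK.inf' hLK (fun x' => dist x x') with hSdef
  have hinf_nonneg : ∀ x : X, 0 ≤ LK.inf' hLK (fun x' => dist x x') := by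
    intro x
    obtain ⟨x', hx', hval⟩ := Finset.exists_mem_eq_inf' hLK (fun x' => dist x x')
    rw [hval]; exact dist_nonneg
  have hS : 0 ≤ S := Finset.sum_nonneg fun x _ => hinf_nonneg x
  -- T ≥ 0
  have hT : 0 ≤ 2 * k * μ / U.card * S := by
    rcases eq_or_lt_of_le hS with hS0 | hS0
    · rw [← hS0]; ring_nf; simp
    · -- some term is positive, hence some distance is positive, hence k ≥ 0
      have hk : 0 ≤ k := by
        by_contra hk
        push_neg at hk
        have hex : ∃ x ∈ U, 0 < LK.inf' hLK (fun x' => dist x x') := by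
          by_contra hno
          push_neg at hno
          have : S = 0 := Finset.sum_eq_zero fun x hx =>
            le_antisymm (hno x hx) (hinf_nonneg x)
          linarith
        obtain ⟨x, hx, hxpos⟩ := hex
        obtain ⟨x', hx', hval⟩ := Finset.exists_mem_eq_inf' hLK (fun x' => dist x x')
        rw [hval] at hxpos
        have h1 := hHlip f hf x x'
        have h2 := abs_nonneg (f x - f x')
        nlinarith
      have : (0:ℝ) ≤ (U.card : ℝ) := Nat.cast_nonneg _
      positivity
  have hcardLK : (0:ℝ) < LK.card := by exact_mod_cast Finset.card_pos.mpr hLK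
  -- bound on A
  have hA0 : 0 ≤ (∑ x ∈ LK, L (h x) (h' x)) / LK.card :=
    div_nonneg (Finset.sum_nonneg fun x _ => hLnonneg _ _) hcardLK.le
  have hA2 : (∑ x ∈ LK, L (h x) (h' x)) / LK.card ≤ 2 * ε := by
    rw [div_le_iff₀ hcardLK]
    calc ∑ x ∈ LK, L (h x) (h' x) ≤ ∑ x ∈ LK, 2 * ε := by
          apply Finset.sum_le_sum
          intro x hx
          have h1 := hLtri (h x) (f x) (h' x)
          have h2 := hhε x hx
          have h3 := hh'ε x hx
          rw [hLsymm (f x) (h' x)] at h1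
          linarith
      _ = 2 * ε * LK.card := by rw [Finset.sum_const, nsmul_eq_mul]; ring
  rcases U.eq_empty_or_nonempty with hU | hU
  · subst hU
    simp only [Finset.sum_empty, Finset.card_empty, Nat.cast_zero, div_zero, sub_zero,
      mul_zero, zero_add] at hD ⊢
    rw [hD, abs_of_nonneg hA0]
    linarith
  · have hcardU : (0:ℝ) < U.card := by exact_mod_cast Finset.card_pos.mpr hU
    have hB0 : 0 ≤ (∑ x ∈ U, L (h x) (h' x)) / U.card :=
      div_nonneg (Finset.sum_nonneg fun x _ => hLnonneg _ _) hcardU.le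
    have hB : (∑ x ∈ U, L (h x) (h' x)) / U.card ≤ 2 * k * μ / U.card * S + 2 * ε := by
      have hsum : ∑ x ∈ U, L (h x) (h' x) ≤
          ∑ x ∈ U, (2 * k * μ * LK.inf' hLK (fun x' => dist x x') + 2 * ε) := by
        apply Finset.sum_le_sum
        intro x hx
        obtain ⟨x', hx', hval⟩ := Finset.exists_mem_eq_inf' hLK (fun x' => dist x x')
        rw [hval]
        have t1 := hLtri (h x) (h x') (h' x)
        have t2 := hLtri (h x') (h' x') (h' x)
        have t3 := hLtri (h x') (f x') (h' x')
        have e1 := hLlip (h x) (h x')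
        have e2 := hLlip (h' x') (h' x)
        have l1 := hHlip h hhH x x'
        have l2 := hHlip h' hh'H x' x
        have p1 : μ * |h x - h x'| ≤ μ * (k * dist x x') :=
          mul_le_mul_of_nonneg_left l1 hμ
        have p2 : μ * |h' x' - h' x| ≤ μ * (k * dist x' x) :=
          mul_le_mul_of_nonneg_left l2 hμ
        rw [dist_comm x' x] at p2
        have q1 := hhε x' hx'
        have q2 := hh'ε x' hx'
        rw [hLsymm (f x') (h' x')] at t3
        linarith
      rw [div_le_iff₀ hcardU]
      calc ∑ x ∈ U, L (h x) (h' x)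
          ≤ ∑ x ∈ U, (2 * k * μ * LK.inf' hLK (fun x' => dist x x') + 2 * ε) := hsum
        _ = 2 * k * μ * S + 2 * ε * U.card := by
            rw [Finset.sum_add_distrib, ← Finset.mul_sum, Finset.sum_const, nsmul_eq_mul]
            ring
        _ = (2 * k * μ / U.card * S + 2 * ε) * U.card := by
            field_simp
    rw [hD, abs_le]
    constructor <;> linarith
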